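/- Suppose X and Y are jointly normal with mean zero, unit variances, and correlation ρ. Define one-sided p-values p₁(X) = 1 − Φ(X) and p₁(Y) = 1 − Φ(Y). Then Cov(p₁(X), p₁(Y)) is zero if ρ = 0, strictly positive if ρ > 0, and strictly negative if ρ < 0. -/

import Mathlib

open MeasureTheory ProbabilityTheory Set
local notation "γ" => gaussianReal 0 1

lemma cheb {ν : Measure ℝ} [IsProbabilityMeasure ν] [NullSingletonClass ν] {f g : ℝ → ℝ}
    (hf : StrictMono f) (hg : StrictMono g)
    (hfb : ∀ x, |f x| ≤ 1) (hgb : ∀ x, |g x| ≤ 1) :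
    (∫ x, f x ∂ν) * (∫ x, g x ∂ν) < ∫ x, f x * g x ∂ν := by
  have hfm : Measurable f := hf.monotone.measurable
  have hgm : Measurable g := hg.monotone.measurable
  have hbdd : ∀ (F : ℝ → ℝ), Measurable F → (∀ x, |F x| ≤ 1) → Integrable F ν := by
    intro F hFm hFb
    exact (integrable_const (1:ℝ)).mono' hFm.aestronglyMeasurable
      (Filter.Eventually.of_forall fun x => by simpa using hFb x)
  have hif : Integrable f ν := hbdd f hfm hfb
  have hig : Integrable g ν := hbdd g hgm hgb
  have hifg : Integrable (fun x => f x * g x) ν := by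
    refine (hbdd _ (hfm.mul hgm) fun x => ?_)
    rw [abs_mul]
    calc |f x| * |g x| ≤ 1 * 1 := by
          exact mul_le_mul (hfb x) (hgb x) (abs_nonneg _) zero_le_one
      _ = 1 := by ring
  set H : ℝ × ℝ → ℝ := fun p => (f p.1 - f p.2) * (g p.1 - g p.2) with hH
  have hbdd2 : ∀ (F : ℝ × ℝ → ℝ), Measurable F → (∀ p, |F p| ≤ 4) →
      Integrable F (ν.prod ν) := by
    intro F hFm hFb
    exact (integrable_const (4:ℝ)).mono' hFm.aestronglyMeasurable
      (Filter.Eventually.of_forall fun x => by simpa using hFb x)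
  have habs : ∀ (u v : ℝ → ℝ), (∀ x, |u x| ≤ 1) → (∀ x, |v x| ≤ 1) →
      ∀ p : ℝ × ℝ, |u p.1 * v p.2| ≤ 4 := by
    intro u v hu hv p
    rw [abs_mul]
    calc |u p.1| * |v p.2| ≤ 1 * 1 :=
          mul_le_mul (hu _) (hv _) (abs_nonneg _) zero_le_one
      _ ≤ 4 := by norm_num
  have hHm : Measurable H := by
    exact ((hfm.comp measurable_fst).sub (hfm.comp measurable_snd)).mul
      ((hgm.comp measurable_fst).sub (hgm.comp measurable_snd))
  have hHi : Integrable H (ν.prod ν) := by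
    refine hbdd2 H hHm fun p => ?_
    rw [hH, abs_mul]
    have h1 : |f p.1 - f p.2| ≤ 2 := by
      rw [abs_le]; constructor <;> linarith [abs_le.mp (hfb p.1), abs_le.mp (hfb p.2)]
    have h2 : |g p.1 - g p.2| ≤ 2 := by
      rw [abs_le]; constructor <;> linarith [abs_le.mp (hgb p.1), abs_le.mp (hgb p.2)]
    nlinarith [abs_nonneg (f p.1 - f p.2), abs_nonneg (g p.1 - g p.2)]
  -- integral of H equals 2 * (∫ fg - ∫f ∫g)
  have i1 : ∫ p, f p.1 * g p.2 ∂(ν.prod ν) = (∫ x, f x ∂ν) * ∫ x, g x ∂ν :=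
    integral_prod_mul f g
  have i2 : ∫ p, f p.2 * g p.1 ∂(ν.prod ν) = (∫ x, f x ∂ν) * ∫ x, g x ∂ν := by
    rw [show (fun p : ℝ × ℝ => f p.2 * g p.1) = fun p : ℝ × ℝ => g p.1 * f p.2 by
      funext p; ring]
    rw [integral_prod_mul (μ := ν) (ν := ν) g f]; ring
  have i3 : ∫ p, f p.1 * g p.1 ∂(ν.prod ν) = ∫ x, f x * g x ∂ν := by
    have := integral_prod_mul (μ := ν) (ν := ν) (L := ℝ) (fun x => f x * g x) (fun _ => (1:ℝ))
    simpa using this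
  have i4 : ∫ p, f p.2 * g p.2 ∂(ν.prod ν) = ∫ x, f x * g x ∂ν := by
    have := integral_prod_mul (μ := ν) (ν := ν) (L := ℝ) (fun _ => (1:ℝ)) (fun x => f x * g x)
    simpa using this
  have e11 : Integrable (fun p : ℝ × ℝ => f p.1 * g p.1) (ν.prod ν) :=
    hbdd2 _ ((hfm.comp measurable_fst).mul (hgm.comp measurable_fst))
      (fun p => by
        rw [abs_mul]
        nlinarith [hfb p.1, hgb p.1, abs_nonneg (f p.1), abs_nonneg (g p.1)])
  have e12 : Integrable (fun p : ℝ × ℝ => f p.1 * g p.2) (ν.prod ν) :=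
    hbdd2 _ ((hfm.comp measurable_fst).mul (hgm.comp measurable_snd))
      (fun p => habs f g hfb hgb p)
  have e21 : Integrable (fun p : ℝ × ℝ => f p.2 * g p.1) (ν.prod ν) :=
    hbdd2 _ ((hfm.comp measurable_snd).mul (hgm.comp measurable_fst))
      (fun p => by
        rw [abs_mul]
        nlinarith [hfb p.2, hgb p.1, abs_nonneg (f p.2), abs_nonneg (g p.1)])
  have e22 : Integrable (fun p : ℝ × ℝ => f p.2 * g p.2) (ν.prod ν) :=
    hbdd2 _ ((hfm.comp measurable_snd).mul (hgm.comp measurable_snd))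
      (fun p => by
        rw [abs_mul]
        nlinarith [hfb p.2, hgb p.2, abs_nonneg (f p.2), abs_nonneg (g p.2)])
  have hexp : ∫ p, H p ∂(ν.prod ν)
      = 2 * ((∫ x, f x * g x ∂ν) - (∫ x, f x ∂ν) * ∫ x, g x ∂ν) := by
    have : H = fun p : ℝ × ℝ =>
        (f p.1 * g p.1 - f p.1 * g p.2) - (f p.2 * g p.1 - f p.2 * g p.2) := by
      funext p; rw [hH]; ring
    have e1s : Integrable (fun p : ℝ × ℝ => f p.1 * g p.1 - f p.1 * g p.2) (ν.prod ν) :=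
      e11.sub e12
    have e2s : Integrable (fun p : ℝ × ℝ => f p.2 * g p.1 - f p.2 * g p.2) (ν.prod ν) :=
      e21.sub e22
    rw [this, integral_sub e1s e2s, integral_sub e11 e12, integral_sub e21 e22, i1, i2, i3, i4]
    ring
  -- H is nonneg and positive off the diagonal
  have hHnn : ∀ p, 0 ≤ H p := by
    intro p
    show 0 ≤ (f p.1 - f p.2) * (g p.1 - g p.2)
    rcases le_total p.1 p.2 with h | h
    · have a1 : f p.1 - f p.2 ≤ 0 := sub_nonpos.mpr (hf.monotone h)
      have a2 : g p.1 - g p.2 ≤ 0 := sub_nonpos.mpr (hg.monotone h)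
      nlinarith
    · have a1 : 0 ≤ f p.1 - f p.2 := sub_nonneg.mpr (hf.monotone h)
      have a2 : 0 ≤ g p.1 - g p.2 := sub_nonneg.mpr (hg.monotone h)
      nlinarith
  have hdiag : (ν.prod ν) {p : ℝ × ℝ | p.1 = p.2} = 0 := by
    rw [Measure.prod_apply (measurableSet_eq_fun measurable_fst measurable_snd)]
    have : ∀ x : ℝ, ν (Prod.mk x ⁻¹' {p : ℝ × ℝ | p.1 = p.2}) = 0 := by
      intro x
      have : Prod.mk x ⁻¹' {p : ℝ × ℝ | p.1 = p.2} = {x} := by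
        ext y; simp [eq_comm]
      rw [this]; exact measure_singleton x
    simp [this]
  have hpos : 0 < ∫ p, H p ∂(ν.prod ν) := by
    rw [integral_pos_iff_support_of_nonneg (fun p => hHnn p) hHi]
    have hsub : {p : ℝ × ℝ | p.1 = p.2}ᶜ ⊆ Function.support H := by
      intro p hp
      simp only [mem_compl_iff, mem_setOf_eq] at hp
      rcases lt_or_gt_of_ne hp with h | h
      · exact ne_of_gt (mul_pos_of_neg_of_neg (sub_neg.mpr (hf h)) (sub_neg.mpr (hg h)))
      · exact ne_of_gt (mul_pos (sub_pos.mpr (hf h)) (sub_pos.mpr (hg h)))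
    have h1 : (ν.prod ν) {p : ℝ × ℝ | p.1 = p.2}ᶜ = 1 := by
      rw [measure_compl (measurableSet_eq_fun measurable_fst measurable_snd) (by simp [hdiag]),
        hdiag]
      simp
    calc (0:ENNReal) < 1 := by norm_num
      _ = (ν.prod ν) {p : ℝ × ℝ | p.1 = p.2}ᶜ := h1.symm
      _ ≤ (ν.prod ν) (Function.support H) := measure_mono hsub
  rw [hexp] at hpos
  linarith


instance osp_noAtoms : NullSingletonClass γ := by
  constructor
  intro x
  exact gaussianReal_absolutelyContinuous 0 one_ne_zero (measure_singleton x)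

lemma osp_Ioc_pos {a b : ℝ} (hab : a < b) : 0 < γ (Ioc a b) := by
  rw [pos_iff_ne_zero]
  intro h
  have := gaussianReal_absolutelyContinuous' 0 one_ne_zero h
  rw [Real.volume_Ioc] at this
  simp only [ENNReal.ofReal_eq_zero, sub_nonpos] at this
  linarith

lemma osp_cdf_strictMono : StrictMono (fun x => cdf γ x) := by
  intro a b hab
  have h1 : γ (Iic a) + γ (Ioc a b) = γ (Iic b) := by
    rw [← measure_union (by
      intro s hs hs' x hx
      exact absurd ((hs' hx).1) (not_lt.mpr (hs hx)) ) measurableSet_Ioc]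
    rw [Set.Iic_union_Ioc_eq_Iic hab.le]
  have hlt : γ (Iic a) < γ (Iic b) := by
    rw [← h1]
    exact ENNReal.lt_add_right (measure_ne_top _ _) (osp_Ioc_pos hab).ne'
  simp only [cdf_eq_real, measureReal_def]
  exact ENNReal.toReal_strict_mono (measure_ne_top _ _) hlt

lemma osp_cdf_abs_le (x : ℝ) : |cdf γ x| ≤ 1 :=
  abs_le.mpr ⟨by linarith [cdf_nonneg γ x], cdf_le_one γ x⟩

lemma osp_cdf_measurable : Measurable (fun x => cdf γ x) :=
  (monotone_cdf γ).measurable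

/-- The conditional mean of `Φ(Y)` given `X = x`. -/
noncomputable def ospLam (ρ : ℝ) (x : ℝ) : ℝ :=
  ∫ z, cdf γ (ρ * x + Real.sqrt (1 - ρ ^ 2) * z) ∂γ

lemma osp_inner_integrable (ρ x : ℝ) :
    Integrable (fun z => cdf γ (ρ * x + Real.sqrt (1 - ρ ^ 2) * z)) γ := by
  refine (integrable_const (1:ℝ)).mono'
    (osp_cdf_measurable.comp ((measurable_id.const_mul _).const_add _)).aestronglyMeasurable
    (Filter.Eventually.of_forall fun z => ?_)
  simpa using osp_cdf_abs_le _

lemma ospLam_abs_le (ρ x : ℝ) : |ospLam ρ x| ≤ 1 := by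
  have := norm_integral_le_of_norm_le_const (μ := γ)
    (f := fun z => cdf γ (ρ * x + Real.sqrt (1 - ρ ^ 2) * z)) (C := 1)
    (Filter.Eventually.of_forall fun z => by simpa using osp_cdf_abs_le _)
  simpa [ospLam] using this

lemma ospLam_strict {ρ : ℝ} (_hρ : ρ ≠ 0) {x₁ x₂ : ℝ} (h : x₁ < x₂) (hsign : 0 < ρ) :
    ospLam ρ x₁ < ospLam ρ x₂ := by
  have key : 0 < ∫ z, (cdf γ (ρ * x₂ + Real.sqrt (1 - ρ ^ 2) * z)
      - cdf γ (ρ * x₁ + Real.sqrt (1 - ρ ^ 2) * z)) ∂γ := by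
    rw [integral_pos_iff_support_of_nonneg]
    · have : Function.support (fun z => cdf γ (ρ * x₂ + Real.sqrt (1 - ρ ^ 2) * z)
          - cdf γ (ρ * x₁ + Real.sqrt (1 - ρ ^ 2) * z)) = Set.univ := by
        ext z
        simp only [Function.mem_support, Set.mem_univ, iff_true]
        have : ρ * x₁ + Real.sqrt (1 - ρ ^ 2) * z < ρ * x₂ + Real.sqrt (1 - ρ ^ 2) * z := by
          nlinarith
        exact (sub_pos.mpr (osp_cdf_strictMono this)).ne'
      rw [this]
      simp
    · intro z
      have : ρ * x₁ + Real.sqrt (1 - ρ ^ 2) * z ≤ ρ * x₂ + Real.sqrt (1 - ρ ^ 2) * z := by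
        nlinarith
      simpa [sub_nonneg] using (monotone_cdf γ) this
    · exact (osp_inner_integrable ρ x₂).sub (osp_inner_integrable ρ x₁)
  rw [integral_sub (osp_inner_integrable ρ x₂) (osp_inner_integrable ρ x₁)] at key
  unfold ospLam
  linarith

lemma ospLam_strictMono {ρ : ℝ} (hρ : 0 < ρ) : StrictMono (ospLam ρ) :=
  fun _ _ h => ospLam_strict hρ.ne' h hρ

lemma ospLam_strictAnti {ρ : ℝ} (hρ : ρ < 0) : StrictAnti (ospLam ρ) := by
  intro x₁ x₂ h
  -- same argument with reversed direction
  have key : 0 < ∫ z, (cdf γ (ρ * x₁ + Real.sqrt (1 - ρ ^ 2) * z)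
      - cdf γ (ρ * x₂ + Real.sqrt (1 - ρ ^ 2) * z)) ∂γ := by
    rw [integral_pos_iff_support_of_nonneg]
    · have : Function.support (fun z => cdf γ (ρ * x₁ + Real.sqrt (1 - ρ ^ 2) * z)
          - cdf γ (ρ * x₂ + Real.sqrt (1 - ρ ^ 2) * z)) = Set.univ := by
        ext z
        simp only [Function.mem_support, Set.mem_univ, iff_true]
        have : ρ * x₂ + Real.sqrt (1 - ρ ^ 2) * z < ρ * x₁ + Real.sqrt (1 - ρ ^ 2) * z := by
          nlinarith
        exact (sub_pos.mpr (osp_cdf_strictMono this)).ne'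
      rw [this]
      simp
    · intro z
      have : ρ * x₂ + Real.sqrt (1 - ρ ^ 2) * z ≤ ρ * x₁ + Real.sqrt (1 - ρ ^ 2) * z := by
        nlinarith
      simpa [sub_nonneg] using (monotone_cdf γ) this
    · exact (osp_inner_integrable ρ x₁).sub (osp_inner_integrable ρ x₂)
  rw [integral_sub (osp_inner_integrable ρ x₁) (osp_inner_integrable ρ x₂)] at key
  unfold ospLam
  linarith

/-- For jointly normal `(X, Y)` with mean zero, unit variances, and correlation `ρ`, the
one-sided p-values `p₁(X) = 1 − Φ(X)`, `p₁(Y) = 1 − Φ(Y)` have covariance whose sign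
matches that of `ρ`: zero if `ρ = 0`, positive if `ρ > 0`, negative if `ρ < 0`. -/
theorem one_sided_pvalue_cov_sign
    {Ω : Type*} [MeasurableSpace Ω] (μ : Measure Ω) [IsProbabilityMeasure μ]
    (ρ : ℝ) (hρ : |ρ| ≤ 1)
    (X Z Y : Ω → ℝ)
    (hX : Measure.map X μ = gaussianReal 0 1)
    (hZ : Measure.map Z μ = gaussianReal 0 1)
    (hindep : IndepFun X Z μ)
    (hY : ∀ ω, Y ω = ρ * X ω + Real.sqrt (1 - ρ ^ 2) * Z ω) :
    (ρ = 0 →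
      (∫ ω, (1 - cdf (gaussianReal 0 1) (X ω)) * (1 - cdf (gaussianReal 0 1) (Y ω)) ∂μ) -
        (∫ ω, (1 - cdf (gaussianReal 0 1) (X ω)) ∂μ) *
          (∫ ω, (1 - cdf (gaussianReal 0 1) (Y ω)) ∂μ) = 0) ∧
    (0 < ρ →
      0 < (∫ ω, (1 - cdf (gaussianReal 0 1) (X ω)) * (1 - cdf (gaussianReal 0 1) (Y ω)) ∂μ) -
        (∫ ω, (1 - cdf (gaussianReal 0 1) (X ω)) ∂μ) *
          (∫ ω, (1 - cdf (gaussianReal 0 1) (Y ω)) ∂μ)) ∧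
    (ρ < 0 →
      (∫ ω, (1 - cdf (gaussianReal 0 1) (X ω)) * (1 - cdf (gaussianReal 0 1) (Y ω)) ∂μ) -
        (∫ ω, (1 - cdf (gaussianReal 0 1) (X ω)) ∂μ) *
          (∫ ω, (1 - cdf (gaussianReal 0 1) (Y ω)) ∂μ) < 0) := by
  have hXm : AEMeasurable X μ := aemeasurable_of_map_neZero (by rw [hX]; infer_instance)
  have hZm : AEMeasurable Z μ := aemeasurable_of_map_neZero (by rw [hZ]; infer_instance)
  have hYe : Y = fun ω => ρ * X ω + Real.sqrt (1 - ρ ^ 2) * Z ω := funext hY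
  have hYm : AEMeasurable Y μ := by
    rw [hYe]; exact (hXm.const_mul ρ).add (hZm.const_mul _)
  have hpair : μ.map (fun ω => (X ω, Z ω)) = Measure.prod γ γ := by
    rw [(indepFun_iff_map_prod_eq_prod_map_map hXm hZm).mp hindep, hX, hZ]
  set c : ℝ := Real.sqrt (1 - ρ ^ 2) with hc
  have hfXm : AEStronglyMeasurable (fun ω => cdf γ (X ω)) μ :=
    (osp_cdf_measurable.comp_aemeasurable hXm).aestronglyMeasurable
  have hfYm : AEStronglyMeasurable (fun ω => cdf γ (Y ω)) μ :=
    (osp_cdf_measurable.comp_aemeasurable hYm).aestronglyMeasurable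
  have hiX : Integrable (fun ω => cdf γ (X ω)) μ :=
    (integrable_const 1).mono' hfXm
      (Filter.Eventually.of_forall fun ω => by simpa using osp_cdf_abs_le (X ω))
  have hiY : Integrable (fun ω => cdf γ (Y ω)) μ :=
    (integrable_const 1).mono' hfYm
      (Filter.Eventually.of_forall fun ω => by simpa using osp_cdf_abs_le (Y ω))
  have hiXY : Integrable (fun ω => cdf γ (X ω) * cdf γ (Y ω)) μ := by
    refine (integrable_const 1).mono' (hfXm.mul hfYm)
      (Filter.Eventually.of_forall fun ω => ?_)
    have h1 := osp_cdf_abs_le (X ω); have h2 := osp_cdf_abs_le (Y ω)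
    simp only [norm_mul, Real.norm_eq_abs]
    nlinarith [abs_nonneg (cdf γ (X ω)), abs_nonneg (cdf γ (Y ω))]
  have hA : ∫ ω, cdf γ (X ω) ∂μ = ∫ x, cdf γ x ∂γ := by
    have h := integral_map (φ := X) hXm (f := fun x => cdf γ x)
      osp_cdf_measurable.aestronglyMeasurable
    rw [hX] at h
    exact h.symm
  have hGm : Measurable (fun p : ℝ × ℝ => cdf γ (ρ * p.1 + c * p.2)) :=
    osp_cdf_measurable.comp ((measurable_fst.const_mul ρ).add (measurable_snd.const_mul c))
  have hGint : Integrable (fun p : ℝ × ℝ => cdf γ (ρ * p.1 + c * p.2)) (Measure.prod γ γ) :=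
    (integrable_const 1).mono' hGm.aestronglyMeasurable
      (Filter.Eventually.of_forall fun p => by simpa using osp_cdf_abs_le _)
  have hB : ∫ ω, cdf γ (Y ω) ∂μ = ∫ x, ospLam ρ x ∂γ := by
    have e1 : ∫ ω, cdf γ (Y ω) ∂μ = ∫ ω, cdf γ (ρ * X ω + c * Z ω) ∂μ := by
      simp only [hY, hc]
    have e2 : ∫ ω, cdf γ (ρ * X ω + c * Z ω) ∂μ
        = ∫ p : ℝ × ℝ, cdf γ (ρ * p.1 + c * p.2) ∂(Measure.prod γ γ) := by
      rw [← hpair]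
      exact (integral_map (hXm.prodMk hZm) hGm.aestronglyMeasurable).symm
    rw [e1, e2, integral_prod _ hGint]
    simp only [ospLam, hc]
  have hG2m : Measurable (fun p : ℝ × ℝ => cdf γ p.1 * cdf γ (ρ * p.1 + c * p.2)) :=
    (osp_cdf_measurable.comp measurable_fst).mul hGm
  have hG2int : Integrable (fun p : ℝ × ℝ => cdf γ p.1 * cdf γ (ρ * p.1 + c * p.2))
      (Measure.prod γ γ) := by
    refine (integrable_const 1).mono' hG2m.aestronglyMeasurable
      (Filter.Eventually.of_forall fun p => ?_)
    have h1 := osp_cdf_abs_le p.1; have h2 := osp_cdf_abs_le (ρ * p.1 + c * p.2)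
    simp only [norm_mul, Real.norm_eq_abs]
    nlinarith [abs_nonneg (cdf γ p.1), abs_nonneg (cdf γ (ρ * p.1 + c * p.2))]
  have hC : ∫ ω, cdf γ (X ω) * cdf γ (Y ω) ∂μ = ∫ x, cdf γ x * ospLam ρ x ∂γ := by
    have e1 : ∫ ω, cdf γ (X ω) * cdf γ (Y ω) ∂μ
        = ∫ ω, cdf γ (X ω) * cdf γ (ρ * X ω + c * Z ω) ∂μ := by
      simp only [hY, hc]
    have e2 : ∫ ω, cdf γ (X ω) * cdf γ (ρ * X ω + c * Z ω) ∂μ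
        = ∫ p : ℝ × ℝ, cdf γ p.1 * cdf γ (ρ * p.1 + c * p.2) ∂(Measure.prod γ γ) := by
      rw [← hpair]
      exact (integral_map (hXm.prodMk hZm) hG2m.aestronglyMeasurable).symm
    rw [e1, e2, integral_prod _ hG2int]
    congr 1
    funext x
    show ∫ y, cdf γ x * cdf γ (ρ * x + c * y) ∂γ = cdf γ x * ospLam ρ x
    rw [integral_const_mul]
    simp only [ospLam, hc]
  have I1 : ∫ ω, (1 - cdf γ (X ω)) ∂μ = 1 - ∫ x, cdf γ x ∂γ := by
    rw [integral_sub (integrable_const 1) hiX, hA]; simp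
  have I2 : ∫ ω, (1 - cdf γ (Y ω)) ∂μ = 1 - ∫ x, ospLam ρ x ∂γ := by
    rw [integral_sub (integrable_const 1) hiY, hB]; simp
  have I3 : ∫ ω, (1 - cdf γ (X ω)) * (1 - cdf γ (Y ω)) ∂μ
      = 1 - (∫ x, cdf γ x ∂γ) - (∫ x, ospLam ρ x ∂γ) + ∫ x, cdf γ x * ospLam ρ x ∂γ := by
    have e : (fun ω => (1 - cdf γ (X ω)) * (1 - cdf γ (Y ω)))
        = fun ω => 1 - cdf γ (X ω) - cdf γ (Y ω) + cdf γ (X ω) * cdf γ (Y ω) := by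
      funext ω; ring
    have ia : Integrable (fun ω => 1 - cdf γ (X ω)) μ := (integrable_const 1).sub hiX
    have ib : Integrable (fun ω => 1 - cdf γ (X ω) - cdf γ (Y ω)) μ := ia.sub hiY
    rw [e, integral_add ib hiXY, integral_sub ia hiY, integral_sub (integrable_const 1) hiX,
      hA, hB, hC]
    simp
  refine ⟨fun h0 => ?_, fun hpos => ?_, fun hneg => ?_⟩
  · subst h0
    have hlam : ∀ x : ℝ, ospLam 0 x = ∫ z, cdf γ z ∂γ := by
      intro x
      unfold ospLam
      norm_num
    rw [I3, I1, I2]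
    have hL : ∫ x, ospLam 0 x ∂γ = ∫ z, cdf γ z ∂γ := by
      simp only [hlam]
      rw [integral_const]
      simp
    have hM : ∫ x, cdf γ x * ospLam 0 x ∂γ = (∫ x, cdf γ x ∂γ) * ∫ z, cdf γ z ∂γ := by
      simp only [hlam]
      rw [integral_mul_const]
    rw [hL, hM]
    ring
  · rw [I3, I1, I2]
    have h := cheb (ν := γ) osp_cdf_strictMono (ospLam_strictMono hpos)
      osp_cdf_abs_le (ospLam_abs_le ρ)
    linarith [h]
  · rw [I3, I1, I2]
    have h := cheb (ν := γ) osp_cdf_strictMono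
      (g := fun x => -ospLam ρ x)
      (fun a b hab => neg_lt_neg (ospLam_strictAnti hneg hab))
      osp_cdf_abs_le (fun x => by simpa using ospLam_abs_le ρ x)
    simp only [mul_neg, integral_neg] at h
    linarith [h]
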